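/- For any k > 1, real G ≥ 1, integer N ≥ 2, suppose E : ℝ → ℂ satisfies |E(y)| ≤ G + 1 + |log(max(|y|,1/N))| + √(max(|y|,1/N)) · (1 + log²(max(N|y|,1))) for all y. Then ∫_ℝ |E(y)|² / max(|y|, 1/N)^{k+1} dy ≤ C_k · N^k · (G + log N)². -/

import Mathlib

open MeasureTheory Real Set

private lemma aux_cont18 {t p : ℝ} (ht : 0 < t) :
    Continuous (fun y : ℝ => max |y| t ^ (-p)) := by
  apply Continuous.rpow_const (continuous_abs.max continuous_const)
  intro x
  left
  have : t ≤ max |x| t := le_max_right _ _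
  positivity

private lemma aux_intOn_Ioi18 {t p : ℝ} (ht : 0 < t) (hp : 1 < p) :
    IntegrableOn (fun y : ℝ => max |y| t ^ (-p)) (Ioi 0) := by
  have h1 : IntegrableOn (fun y : ℝ => max |y| t ^ (-p)) (Ioc 0 t) :=
    ((aux_cont18 ht).integrableOn_Icc (μ := volume) (a := 0) (b := t)).mono_set
      Ioc_subset_Icc_self
  have h2 : IntegrableOn (fun y : ℝ => max |y| t ^ (-p)) (Ioi t) := by
    apply (integrableOn_Ioi_rpow_of_lt (by linarith : -p < -1) ht).congr_fun _ measurableSet_Ioi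
    intro x hx
    show (x:ℝ) ^ (-p) = max |x| t ^ (-p)
    rw [abs_of_pos (ht.trans hx), max_eq_left (le_of_lt hx)]
  have := h1.union h2
  rwa [Ioc_union_Ioi_eq_Ioi (le_of_lt ht)] at this

private lemma aux_integrable18 {t p : ℝ} (ht : 0 < t) (hp : 1 < p) :
    Integrable (fun y : ℝ => max |y| t ^ (-p)) := by
  have hIoi := aux_intOn_Ioi18 ht hp
  have hIic : IntegrableOn (fun y : ℝ => max |y| t ^ (-p)) (Iic 0) := by
    rw [← Measure.map_neg_eq_self (volume : Measure ℝ)]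
    have m : MeasurableEmbedding fun x : ℝ => -x := (Homeomorph.neg ℝ).measurableEmbedding
    rw [m.integrableOn_map_iff]
    simp_rw [Function.comp_def, abs_neg, neg_preimage, neg_Iic, neg_zero]
    exact Iff.mpr integrableOn_Ici_iff_integrableOn_Ioi hIoi
  have := hIic.union hIoi
  rwa [Iic_union_Ioi, integrableOn_univ] at this

private lemma aux_integral18 {t p : ℝ} (ht : 0 < t) (hp : 1 < p) :
    ∫ y : ℝ, max |y| t ^ (-p) = 2 * t ^ (1 - p) * (1 + (p - 1)⁻¹) := by
  have key : (∫ y : ℝ, max |y| t ^ (-p)) = 2 * ∫ x in Ioi (0:ℝ), max x t ^ (-p) := by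
    rw [← integral_comp_abs (f := fun x => max x t ^ (-p))]
  rw [key]
  have h1 : IntegrableOn (fun x : ℝ => max x t ^ (-p)) (Ioc 0 t) := by
    have := ((aux_cont18 (p := p) ht).integrableOn_Icc (μ := volume) (a := 0) (b := t)).mono_set
      Ioc_subset_Icc_self
    apply this.congr_fun _ measurableSet_Ioc
    intro x hx
    show max |x| t ^ (-p) = max x t ^ (-p)
    rw [abs_of_pos hx.1]
  have h2 : IntegrableOn (fun x : ℝ => max x t ^ (-p)) (Ioi t) := by
    apply (integrableOn_Ioi_rpow_of_lt (by linarith : -p < -1) ht).congr_fun _ measurableSet_Ioi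
    intro x hx
    show (x:ℝ) ^ (-p) = max x t ^ (-p)
    rw [max_eq_left (le_of_lt hx)]
  have hsplit : (∫ x in Ioi (0:ℝ), max x t ^ (-p))
      = (∫ x in Ioc (0:ℝ) t, max x t ^ (-p)) + ∫ x in Ioi t, max x t ^ (-p) := by
    rw [← setIntegral_union (Ioc_disjoint_Ioi le_rfl) measurableSet_Ioi h1 h2,
      Ioc_union_Ioi_eq_Ioi (le_of_lt ht)]
  have e1 : (∫ x in Ioc (0:ℝ) t, max x t ^ (-p)) = t ^ (1 - p) := by
    rw [setIntegral_congr_fun measurableSet_Ioc (g := fun _ => t ^ (-p))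
      (fun x hx => by rw [max_eq_right hx.2])]
    rw [setIntegral_const, Real.volume_real_Ioc_of_le ht.le, smul_eq_mul,
      sub_zero, ← Real.rpow_one_add' (le_of_lt ht) (by intro h; nlinarith)]
    ring_nf
  have e2 : (∫ x in Ioi t, max x t ^ (-p)) = t ^ (1 - p) * (p - 1)⁻¹ := by
    rw [setIntegral_congr_fun measurableSet_Ioi (g := fun x => x ^ (-p))
      (fun x hx => by rw [max_eq_left (le_of_lt hx)])]
    rw [integral_Ioi_rpow_of_lt (by linarith) ht]
    rw [show -p + 1 = 1 - p by ring]
    have hne : p - 1 ≠ 0 := by linarith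
    have hne' : (1:ℝ) - p ≠ 0 := by linarith
    field_simp
    ring
  rw [hsplit, e1, e2]; ring

private lemma helper_sq18 {X L s u : ℝ} (hX : 0 ≤ X) (h : X ≤ 2*L + 2*s + s*u) :
    X^2 ≤ 16*L^2 + 16*s^2 + 2*s^2*u^2 := by
  have hb : X^2 ≤ (2*L + 2*s + s*u)^2 := pow_le_pow_left₀ hX h 2
  nlinarith [sq_nonneg (2*L + 2*s - s*u), sq_nonneg (L - s)]

private lemma helper_four18 {a b w : ℝ} (hw0 : 0 ≤ w) (ha : 0 ≤ a) (hb : 0 ≤ b) (h : w ≤ a + b) :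
    (1 + w^2)^2 ≤ 3 + 12*a^4 + 12*b^4 := by
  have hw2 : w^2 ≤ 2*a^2 + 2*b^2 := by nlinarith [sq_nonneg (a - b)]
  nlinarith [sq_nonneg (a^2 - b^2), sq_nonneg (1 - 2*a^2), sq_nonneg (1 - 2*b^2),
    sq_nonneg w, sq_nonneg a, sq_nonneg b]

set_option maxHeartbeats 1000000 in
private lemma pointwise18 (k : ℝ) (hk : 1 < k) (G : ℝ) (hG : 1 ≤ G) (Nr : ℝ) (hN2 : 2 ≤ Nr)
    (y : ℝ) (X : ℝ) (hX : 0 ≤ X)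
    (hEy : X ≤ G + 1 + |Real.log (max |y| (1/Nr))| +
        Real.sqrt (max |y| (1/Nr)) * (1 + Real.log (max (Nr * |y|) 1) ^ 2)) :
    X ^ 2 / max |y| (1/Nr) ^ (k+1) ≤
      16 * (G + Real.log Nr)^2 * (max |y| (1/Nr) ^ (-(k+1)))
        + ((118 * Nr * (G + Real.log Nr)^2) * (max |y| (1/Nr) ^ (-k))
        + ((24 * ((k-1)/8)⁻¹^4) * (max |y| (1/Nr) ^ (-k))
          + (24 * ((k-1)/8)⁻¹^4) * (max |y| (1/Nr) ^ (-((k+1)/2))))) := by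
  have hNpos : (0:ℝ) < Nr := by linarith
  have hN1 : (1:ℝ) ≤ Nr := by linarith
  have ht : (0:ℝ) < 1/Nr := by positivity
  have ht2 : 1/Nr ≤ 1/2 := by
    rw [div_le_div_iff₀ hNpos (by norm_num)]; linarith
  have hε : (0:ℝ) < (k-1)/8 := by linarith
  have hlogN : 0 ≤ Real.log Nr := Real.log_nonneg hN1
  obtain ⟨LL, hLdef⟩ : ∃ L', G + Real.log Nr = L' := ⟨_, rfl⟩
  have hL1 : 1 ≤ LL := by rw [← hLdef]; linarith
  have hlogNL : Real.log Nr ≤ LL := by rw [← hLdef]; linarith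
  have hlogN2 : (Real.log Nr)^2 ≤ 4 * Nr := by
    have h1 : Real.log Nr ≤ Nr ^ ((1:ℝ)/2) / (1/2) :=
      Real.log_le_rpow_div hNpos.le (by norm_num)
    have h2 : (Nr ^ ((1:ℝ)/2)) ^ 2 = Nr := by
      rw [← Real.rpow_natCast (Nr ^ ((1:ℝ)/2)) 2, ← Real.rpow_mul hNpos.le]
      norm_num
    have h3 : 0 ≤ Nr ^ ((1:ℝ)/2) := by positivity
    nlinarith
  rw [hLdef]
  obtain ⟨m, hmdef⟩ : ∃ m', max |y| (1/Nr) = m' := ⟨_, rfl⟩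
  rw [hmdef] at hEy ⊢
  have hmt : 1/Nr ≤ m := hmdef ▸ le_max_right _ _
  have hmy : |y| ≤ m := hmdef ▸ le_max_left _ _
  have hm0 : 0 < m := lt_of_lt_of_le ht hmt
  obtain ⟨s, hsdef⟩ : ∃ s', Real.sqrt m = s' := ⟨_, rfl⟩
  rw [hsdef] at hEy
  have hs0 : 0 ≤ s := hsdef ▸ Real.sqrt_nonneg m
  have hs2 : s ^ 2 = m := by rw [← hsdef]; exact Real.sq_sqrt hm0.le
  obtain ⟨w, hwdef⟩ : ∃ w', Real.log (max (Nr * |y|) 1) = w' := ⟨_, rfl⟩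
  rw [hwdef] at hEy
  have hw0 : 0 ≤ w := hwdef ▸ Real.log_nonneg (le_max_right _ _)
  obtain ⟨l, hldef⟩ : ∃ l', Real.log (max |y| 1) = l' := ⟨_, rfl⟩
  have hl0 : 0 ≤ l := hldef ▸ Real.log_nonneg (le_max_right _ _)
  -- |log m| ≤ log Nr + 2 s
  have habs : |Real.log m| ≤ Real.log Nr + 2 * s := by
    rcases le_total m 1 with h | h
    · have hminv : m⁻¹ ≤ Nr := by
        rw [inv_le_comm₀ hm0 hNpos]
        rwa [one_div] at hmt
      have h2 : -Real.log m ≤ Real.log Nr := by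
        rw [← Real.log_inv]
        exact Real.log_le_log (by positivity) hminv
      rw [abs_of_nonpos (Real.log_nonpos hm0.le h)]
      linarith
    · have h1 : Real.log m ≤ m ^ ((1:ℝ)/2) / (1/2) :=
        Real.log_le_rpow_div hm0.le (by norm_num)
      have h2 : m ^ ((1:ℝ)/2) = s := by rw [← hsdef, Real.sqrt_eq_rpow]
      rw [abs_of_nonneg (Real.log_nonneg h)]
      rw [h2] at h1
      linarith
  have h1 : X ≤ 2 * LL + 2 * s + s * (1 + w^2) := by
    have hsw : 0 ≤ s * (1 + w^2) := by positivity
    have hGL : G + 1 + Real.log Nr ≤ 2 * LL := by rw [← hLdef]; linarith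
    linarith [hEy, habs]
  have h2 : X ^ 2 ≤ 16 * LL^2 + 16 * m + 2 * m * (1 + w^2)^2 := by
    have := helper_sq18 hX h1
    rw [hs2] at this
    linarith
  have h3 : w ≤ Real.log Nr + l := by
    have hmax : max (Nr * |y|) 1 ≤ Nr * max |y| 1 := by
      apply max_le
      · exact mul_le_mul_of_nonneg_left (le_max_left _ _) (by positivity)
      · nlinarith [le_max_right |y| 1]
    rw [← hwdef, ← hldef]
    calc Real.log (max (Nr * |y|) 1) ≤ Real.log (Nr * max |y| 1) :=
          Real.log_le_log (by positivity) hmax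
      _ = Real.log Nr + Real.log (max |y| 1) := by
          rw [Real.log_mul (by positivity) (by positivity)]
  have h4 : (1 + w^2)^2 ≤ 3 + 12 * (Real.log Nr)^4 + 12 * l^4 :=
    helper_four18 hw0 hlogN hl0 h3
  have hlog4 : (Real.log Nr)^4 ≤ 4 * Nr * LL^2 := by
    have h5 : (Real.log Nr)^2 ≤ LL^2 := by nlinarith
    have h6 : (Real.log Nr)^2 * (Real.log Nr)^2 ≤ LL^2 * (4*Nr) :=
      mul_le_mul h5 hlogN2 (sq_nonneg _) (by positivity)
    calc (Real.log Nr)^4 = (Real.log Nr)^2 * (Real.log Nr)^2 := by ring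
      _ ≤ LL^2 * (4*Nr) := h6
      _ = 4 * Nr * LL^2 := by ring
  have hNL : (1:ℝ) ≤ Nr * LL^2 := by nlinarith
  have h5 : X ^ 2 ≤ 16 * LL^2 + 118 * Nr * LL^2 * m + 24 * l^4 * m := by
    have p1 := mul_le_mul_of_nonneg_left h4 (by positivity : (0:ℝ) ≤ 2*m)
    have p2 := mul_le_mul_of_nonneg_left hlog4 (by positivity : (0:ℝ) ≤ 24*m)
    have p3 := mul_le_mul_of_nonneg_left hNL (by positivity : (0:ℝ) ≤ 22*m)
    linarith [h2, p1, p2, p3]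
  have hmm : m * m ^ (-(k+1)) = m ^ (-k) := by
    rw [show -k = 1 + (-(k+1)) by ring, Real.rpow_add hm0, Real.rpow_one]
  have hdiv : X ^ 2 / m ^ (k+1) = X ^ 2 * m ^ (-(k+1)) := by
    rw [Real.rpow_neg hm0.le, div_eq_mul_inv]
  have hstep : X ^ 2 * m ^ (-(k+1)) ≤
      16 * LL^2 * m ^ (-(k+1)) + 118 * Nr * LL^2 * m ^ (-k) + 24 * l^4 * m ^ (-k) := by
    have hrn : (0:ℝ) ≤ m ^ (-(k+1)) := Real.rpow_nonneg hm0.le _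
    calc X ^ 2 * m ^ (-(k+1))
        ≤ (16 * LL^2 + 118 * Nr * LL^2 * m + 24 * l^4 * m) * m ^ (-(k+1)) :=
          mul_le_mul_of_nonneg_right h5 hrn
      _ = 16 * LL^2 * m ^ (-(k+1)) + 118 * Nr * LL^2 * (m * m ^ (-(k+1)))
          + 24 * l^4 * (m * m ^ (-(k+1))) := by ring
      _ = _ := by rw [hmm]
  have hlterm : l^4 * m ^ (-k) ≤ ((k-1)/8)⁻¹^4 * (m ^ (-k)) + ((k-1)/8)⁻¹^4 * (m ^ (-((k+1)/2))) := by
    have hrk : (0:ℝ) ≤ m ^ (-k) := Real.rpow_nonneg hm0.le _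
    have hrq : (0:ℝ) ≤ m ^ (-((k+1)/2)) := Real.rpow_nonneg hm0.le _
    have hrε : (0:ℝ) ≤ ((k-1)/8)⁻¹^4 := by positivity
    rcases le_or_gt |y| 1 with h | h
    · have hl00 : l = 0 := by rw [← hldef, max_eq_right h, Real.log_one]
      rw [hl00]
      nlinarith
    · have hmy' : m = |y| := by
        rw [← hmdef, max_eq_left (by linarith)]
      have hl : l = Real.log m := by rw [← hldef, max_eq_left h.le, hmy']
      have hle : l ≤ m ^ ((k-1)/8) / ((k-1)/8) := by
        rw [hl]; exact Real.log_le_rpow_div hm0.le hε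
      have hl4 : l^4 ≤ ((k-1)/8)⁻¹^4 * m ^ (4*((k-1)/8)) := by
        have h4' := pow_le_pow_left₀ hl0 hle 4
        rw [div_pow] at h4'
        calc l^4 ≤ (m ^ ((k-1)/8))^4 / ((k-1)/8)^4 := h4'
          _ = ((k-1)/8)⁻¹^4 * m ^ (4*((k-1)/8)) := by
              rw [← Real.rpow_natCast (m ^ ((k-1)/8)) 4, ← Real.rpow_mul hm0.le]
              rw [div_eq_mul_inv, ← inv_pow]
              ring_nf
      have hcomb : m ^ (4*((k-1)/8)) * m ^ (-k) = m ^ (-((k+1)/2)) := by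
        rw [← Real.rpow_add hm0]
        congr 1
        ring
      calc l^4 * m ^ (-k) ≤ (((k-1)/8)⁻¹^4 * m ^ (4*((k-1)/8))) * m ^ (-k) :=
            mul_le_mul_of_nonneg_right hl4 hrk
        _ = ((k-1)/8)⁻¹^4 * (m ^ (4*((k-1)/8)) * m ^ (-k)) := by ring
        _ = ((k-1)/8)⁻¹^4 * m ^ (-((k+1)/2)) := by rw [hcomb]
        _ ≤ ((k-1)/8)⁻¹^4 * (m ^ (-k)) + ((k-1)/8)⁻¹^4 * (m ^ (-((k+1)/2))) := by
            linarith [mul_nonneg hrε hrk]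
  rw [hdiv]
  calc X ^ 2 * m ^ (-(k+1))
      ≤ 16 * LL^2 * m ^ (-(k+1)) + 118 * Nr * LL^2 * m ^ (-k) + 24 * l^4 * m ^ (-k) := hstep
    _ ≤ 16 * LL^2 * (m ^ (-(k+1))) + ((118 * Nr * LL^2) * (m ^ (-k))
        + ((24 * ((k-1)/8)⁻¹^4) * (m ^ (-k))
          + (24 * ((k-1)/8)⁻¹^4) * (m ^ (-((k+1)/2))))) := by linarith [hlterm]

set_option maxHeartbeats 1000000 in
private lemma final18 (k : ℝ) (hk : 1 < k) (Nr L : ℝ) (hN1 : 1 ≤ Nr) (hL1 : 1 ≤ L) :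
    16 * L^2 * (2 * (1/Nr) ^ (1-(k+1)) * (1 + ((k+1)-1)⁻¹))
      + ((118 * Nr * L^2) * (2 * (1/Nr) ^ (1-k) * (1 + (k-1)⁻¹))
      + ((24 * ((k-1)/8)⁻¹^4) * (2 * (1/Nr) ^ (1-k) * (1 + (k-1)⁻¹))
        + (24 * ((k-1)/8)⁻¹^4) * (2 * (1/Nr) ^ (1-(k+1)/2) * (1 + ((k+1)/2-1)⁻¹))))
    ≤ (300 * (1 + (k-1)⁻¹) + 96 * ((k-1)/8)⁻¹ ^ 4 * (1 + 2 * (k-1)⁻¹)) * Nr ^ k * L ^ 2 := by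
  have hNpos : (0:ℝ) < Nr := by linarith
  have htN : ∀ p : ℝ, (1/Nr) ^ (1-p) = Nr ^ (p-1) := by
    intro p
    rw [one_div, ← Real.rpow_neg_one Nr, ← Real.rpow_mul hNpos.le]
    congr 1
    ring
  rw [htN (k+1), htN k, htN ((k+1)/2), show (k+1)-1 = k by ring]
  have hqinv : ((k+1)/2-1)⁻¹ = 2 * (k-1)⁻¹ := by
    rw [show (k+1)/2 - 1 = (k-1)/2 by ring, div_eq_mul_inv, mul_inv, inv_inv]
    ring
  rw [hqinv]
  have hNk_pos : (0:ℝ) < Nr ^ k := Real.rpow_pos_of_pos hNpos k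
  have hNk1 : Nr ^ (k-1) ≤ Nr ^ k :=
    Real.rpow_le_rpow_of_exponent_le hN1 (by linarith)
  have hNq1 : Nr ^ ((k+1)/2-1) ≤ Nr ^ k :=
    Real.rpow_le_rpow_of_exponent_le hN1 (by linarith)
  have hNmul : Nr * Nr ^ (k-1) = Nr ^ k := by
    nth_rewrite 1 [← Real.rpow_one Nr]
    rw [← Real.rpow_add hNpos]
    congr 1
    ring
  have hδinv : (0:ℝ) < (k-1)⁻¹ := by
    have : (0:ℝ) < k - 1 := by linarith
    positivity
  have hεp : (0:ℝ) < ((k-1)/8)⁻¹^4 := by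
    have : (0:ℝ) < k - 1 := by linarith
    positivity
  have hL2 : (1:ℝ) ≤ L^2 := by nlinarith
  have hkinv : k⁻¹ ≤ 1 := by
    rw [inv_le_one_iff₀]; right; linarith
  have hkinv0 : (0:ℝ) < k⁻¹ := by positivity
  have e1 : 16 * L^2 * (2 * Nr^k * (1 + k⁻¹)) ≤ 64 * (Nr^k * L^2) := by
    have hk2 : 1 + k⁻¹ ≤ 2 := by linarith
    calc 16 * L^2 * (2 * Nr^k * (1 + k⁻¹)) = 32 * (Nr^k * L^2) * (1 + k⁻¹) := by ring
      _ ≤ 32 * (Nr^k * L^2) * 2 := by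
          apply mul_le_mul_of_nonneg_left hk2
          positivity
      _ = 64 * (Nr^k * L^2) := by ring
  have e2 : (118 * Nr * L^2) * (2 * Nr^(k-1) * (1 + (k-1)⁻¹))
      = 236 * (1 + (k-1)⁻¹) * (Nr^k * L^2) := by
    rw [show (118 * Nr * L^2) * (2 * Nr^(k-1) * (1 + (k-1)⁻¹))
      = 236 * (1 + (k-1)⁻¹) * ((Nr * Nr^(k-1)) * L^2) by ring, hNmul]
  have e3 : (24 * ((k-1)/8)⁻¹^4) * (2 * Nr^(k-1) * (1 + (k-1)⁻¹))
      ≤ 48 * ((k-1)/8)⁻¹^4 * (1 + (k-1)⁻¹) * (Nr^k * L^2) := by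
    calc (24 * ((k-1)/8)⁻¹^4) * (2 * Nr^(k-1) * (1 + (k-1)⁻¹))
        = 48 * ((k-1)/8)⁻¹^4 * (1 + (k-1)⁻¹) * Nr^(k-1) := by ring
      _ ≤ 48 * ((k-1)/8)⁻¹^4 * (1 + (k-1)⁻¹) * Nr^k := by
          apply mul_le_mul_of_nonneg_left hNk1
          positivity
      _ = 48 * ((k-1)/8)⁻¹^4 * (1 + (k-1)⁻¹) * Nr^k * 1 := by ring
      _ ≤ 48 * ((k-1)/8)⁻¹^4 * (1 + (k-1)⁻¹) * Nr^k * L^2 := by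
          apply mul_le_mul_of_nonneg_left hL2
          positivity
      _ = 48 * ((k-1)/8)⁻¹^4 * (1 + (k-1)⁻¹) * (Nr^k * L^2) := by ring
  have e4 : (24 * ((k-1)/8)⁻¹^4) * (2 * Nr^((k+1)/2-1) * (1 + 2*(k-1)⁻¹))
      ≤ 48 * ((k-1)/8)⁻¹^4 * (1 + 2*(k-1)⁻¹) * (Nr^k * L^2) := by
    calc (24 * ((k-1)/8)⁻¹^4) * (2 * Nr^((k+1)/2-1) * (1 + 2*(k-1)⁻¹))
        = 48 * ((k-1)/8)⁻¹^4 * (1 + 2*(k-1)⁻¹) * Nr^((k+1)/2-1) := by ring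
      _ ≤ 48 * ((k-1)/8)⁻¹^4 * (1 + 2*(k-1)⁻¹) * Nr^k := by
          apply mul_le_mul_of_nonneg_left hNq1
          positivity
      _ = 48 * ((k-1)/8)⁻¹^4 * (1 + 2*(k-1)⁻¹) * Nr^k * 1 := by ring
      _ ≤ 48 * ((k-1)/8)⁻¹^4 * (1 + 2*(k-1)⁻¹) * Nr^k * L^2 := by
          apply mul_le_mul_of_nonneg_left hL2
          positivity
      _ = 48 * ((k-1)/8)⁻¹^4 * (1 + 2*(k-1)⁻¹) * (Nr^k * L^2) := by ring
  have hAL : (0:ℝ) < Nr^k * L^2 := by positivity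
  have c1 : (64:ℝ) + 236 * (1 + (k-1)⁻¹) ≤ 300 * (1 + (k-1)⁻¹) := by linarith
  have c2 : 48 * ((k-1)/8)⁻¹^4 * (1 + (k-1)⁻¹) + 48 * ((k-1)/8)⁻¹^4 * (1 + 2*(k-1)⁻¹)
      ≤ 96 * ((k-1)/8)⁻¹^4 * (1 + 2*(k-1)⁻¹) := by nlinarith [mul_pos hεp hδinv]
  have d1 := mul_le_mul_of_nonneg_right c1 hAL.le
  have d2 := mul_le_mul_of_nonneg_right c2 hAL.le
  have goal2 : (300 * (1 + (k-1)⁻¹) + 96 * ((k-1)/8)⁻¹ ^ 4 * (1 + 2 * (k-1)⁻¹)) * Nr ^ k * L ^ 2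
      = (300 * (1 + (k-1)⁻¹)) * (Nr^k * L^2) + (96 * ((k-1)/8)⁻¹ ^ 4 * (1 + 2 * (k-1)⁻¹)) * (Nr^k * L^2) := by
    ring
  rw [goal2]
  linarith [e1, e2, e3, e4, d1, d2]

set_option maxHeartbeats 1000000 in
/-- Abstract form of the `L`-bound lemma: for `k > 1` there is `C_k > 0` such that for all
`G ≥ 1`, integers `N ≥ 2` and `E : ℝ → ℂ` satisfying the pointwise error-term bound,
`∫_ℝ |E(y)|²/max(|y|,1/N)^(k+1) dy ≤ C_k N^k (G + log N)²`. -/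
theorem stmt18 (k : ℝ) (hk : 1 < k) :
    ∃ C : ℝ, 0 < C ∧ ∀ G : ℝ, 1 ≤ G → ∀ N : ℕ, 2 ≤ N → ∀ E : ℝ → ℂ,
      (∀ y : ℝ, ‖E y‖ ≤ G + 1 + |Real.log (max |y| (1 / N))| +
        Real.sqrt (max |y| (1 / N)) * (1 + Real.log (max ((N : ℝ) * |y|) 1) ^ 2)) →
      (∫ y : ℝ, ‖E y‖ ^ 2 / max |y| (1 / N) ^ (k + 1)) ≤
        C * (N : ℝ) ^ k * (G + Real.log N) ^ 2 := by
  have hδ : (0:ℝ) < k - 1 := by linarith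
  refine ⟨300 * (1 + (k-1)⁻¹) + 96 * ((k-1)/8)⁻¹ ^ 4 * (1 + 2 * (k-1)⁻¹), by positivity, ?_⟩
  intro G hG N hN E hE
  have hN1 : (1:ℝ) ≤ (N:ℝ) := by exact_mod_cast Nat.one_le_of_lt hN
  have hN2 : (2:ℝ) ≤ (N:ℝ) := by exact_mod_cast hN
  have hNpos : (0:ℝ) < N := by linarith
  have ht : (0:ℝ) < 1/(N:ℝ) := by positivity
  have hk1 : (1:ℝ) < k + 1 := by linarith
  have hq : (1:ℝ) < (k+1)/2 := by linarith
  have hlogN : 0 ≤ Real.log N := Real.log_nonneg hN1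
  have hL1 : (1:ℝ) ≤ G + Real.log N := by linarith
  have hg1 := aux_integrable18 ht hk1
  have hg2 := aux_integrable18 ht hk
  have hg3 := aux_integrable18 ht hq
  have hA : Integrable (fun y : ℝ =>
      16 * (G + Real.log N)^2 * (max |y| (1/(N:ℝ)) ^ (-(k+1)))) := hg1.const_mul _
  have hB : Integrable (fun y : ℝ =>
      (118 * (N:ℝ) * (G + Real.log N)^2) * (max |y| (1/(N:ℝ)) ^ (-k))) := hg2.const_mul _
  have hC : Integrable (fun y : ℝ =>
      (24 * ((k-1)/8)⁻¹^4) * (max |y| (1/(N:ℝ)) ^ (-k))) := hg2.const_mul _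
  have hD : Integrable (fun y : ℝ =>
      (24 * ((k-1)/8)⁻¹^4) * (max |y| (1/(N:ℝ)) ^ (-((k+1)/2)))) := hg3.const_mul _
  have hCD : Integrable (fun y : ℝ =>
      (24 * ((k-1)/8)⁻¹^4) * (max |y| (1/(N:ℝ)) ^ (-k))
        + (24 * ((k-1)/8)⁻¹^4) * (max |y| (1/(N:ℝ)) ^ (-((k+1)/2)))) := hC.add hD
  have hBCD : Integrable (fun y : ℝ =>
      (118 * (N:ℝ) * (G + Real.log N)^2) * (max |y| (1/(N:ℝ)) ^ (-k))
        + ((24 * ((k-1)/8)⁻¹^4) * (max |y| (1/(N:ℝ)) ^ (-k))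
          + (24 * ((k-1)/8)⁻¹^4) * (max |y| (1/(N:ℝ)) ^ (-((k+1)/2))))) := hB.add hCD
  have hFint : Integrable (fun y : ℝ =>
      16 * (G + Real.log N)^2 * (max |y| (1/(N:ℝ)) ^ (-(k+1)))
        + ((118 * (N:ℝ) * (G + Real.log N)^2) * (max |y| (1/(N:ℝ)) ^ (-k))
        + ((24 * ((k-1)/8)⁻¹^4) * (max |y| (1/(N:ℝ)) ^ (-k))
          + (24 * ((k-1)/8)⁻¹^4) * (max |y| (1/(N:ℝ)) ^ (-((k+1)/2)))))) := hA.add hBCD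
  have hmono : (∫ y : ℝ, ‖E y‖ ^ 2 / max |y| (1/(N:ℝ)) ^ (k+1)) ≤
      ∫ y : ℝ, (16 * (G + Real.log N)^2 * (max |y| (1/(N:ℝ)) ^ (-(k+1)))
        + ((118 * (N:ℝ) * (G + Real.log N)^2) * (max |y| (1/(N:ℝ)) ^ (-k))
        + ((24 * ((k-1)/8)⁻¹^4) * (max |y| (1/(N:ℝ)) ^ (-k))
          + (24 * ((k-1)/8)⁻¹^4) * (max |y| (1/(N:ℝ)) ^ (-((k+1)/2)))))) := by
    apply integral_mono_of_nonneg
    · exact Filter.Eventually.of_forall fun y => by positivity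
    · exact hFint
    · exact Filter.Eventually.of_forall fun y =>
        pointwise18 k hk G hG (N:ℝ) hN2 y ‖E y‖ (norm_nonneg _) (hE y)
  have hIval : (∫ y : ℝ, (16 * (G + Real.log N)^2 * (max |y| (1/(N:ℝ)) ^ (-(k+1)))
        + ((118 * (N:ℝ) * (G + Real.log N)^2) * (max |y| (1/(N:ℝ)) ^ (-k))
        + ((24 * ((k-1)/8)⁻¹^4) * (max |y| (1/(N:ℝ)) ^ (-k))
          + (24 * ((k-1)/8)⁻¹^4) * (max |y| (1/(N:ℝ)) ^ (-((k+1)/2)))))))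
      = 16 * (G + Real.log N)^2 * (2 * (1/(N:ℝ)) ^ (1-(k+1)) * (1 + ((k+1)-1)⁻¹))
        + ((118 * (N:ℝ) * (G + Real.log N)^2) * (2 * (1/(N:ℝ)) ^ (1-k) * (1 + (k-1)⁻¹))
        + ((24 * ((k-1)/8)⁻¹^4) * (2 * (1/(N:ℝ)) ^ (1-k) * (1 + (k-1)⁻¹))
          + (24 * ((k-1)/8)⁻¹^4) * (2 * (1/(N:ℝ)) ^ (1-(k+1)/2) * (1 + ((k+1)/2-1)⁻¹)))) := by
    rw [integral_add hA hBCD, integral_add hB hCD, integral_add hC hD,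
      integral_const_mul, integral_const_mul, integral_const_mul, integral_const_mul,
      aux_integral18 ht hk1, aux_integral18 ht hk, aux_integral18 ht hq]
  calc (∫ y : ℝ, ‖E y‖ ^ 2 / max |y| (1/(N:ℝ)) ^ (k+1)) ≤ _ := hmono
    _ ≤ _ := by
        rw [hIval]
        exact final18 k hk (N:ℝ) (G + Real.log N) hN1 hL1
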